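/- arXiv:2003.06867 — 4 statements merged into one kernel-verified Lean document; each statement's English description precedes it below -/
import Mathlib

section
/- With C_d := e^{d/4} √2 / (8d)^{d/4} · √(Γ(d)/Γ(d/2)), one has C_d ≤ 2^{-d/2 + 1/4} for all natural numbers d ≥ 1. -/
open Real Filter Nat Topology

-- step 1: per-step bound with constant 1/3
lemma diff_le (n : ℕ) :
    Real.log (Stirling.stirlingSeq (n + 1)) - Real.log (Stirling.stirlingSeq (n + 2)) ≤
      1 / (12 * ((n:ℝ) + 1) * ((n:ℝ) + 2)) := by
  set x : ℝ := ((1 : ℝ) / (2 * ((n:ℕ) + 1 : ℕ) + 1)) ^ 2 with hx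
  have hx_nonneg : (0:ℝ) ≤ x := sq_nonneg _
  have hx_lt : x < 1 := by
    rw [hx, one_div, inv_pow]
    refine inv_lt_one_of_one_lt₀ (one_lt_pow₀ ?_ two_ne_zero)
    push_cast; nlinarith [Nat.cast_nonneg (α := ℝ) n]
  have g : HasSum (fun k : ℕ => (1/3 : ℝ) * x ^ (k + 1)) (1/3 * (x / (1 - x))) := by
    have := (hasSum_geometric_of_lt_one hx_nonneg hx_lt).mul_left x
    simp_rw [← _root_.pow_succ'] at this
    exact this.mul_left (1/3)
  have hab : ∀ k : ℕ, (1 : ℝ) / (2 * ↑(k + 1) + 1) * x ^ (k + 1) ≤ (1/3 : ℝ) * x ^ (k+1) := by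
    intro k
    have h1 : (1:ℝ) / (2 * ↑(k+1) + 1) ≤ 1/3 := by
      rw [div_le_div_iff₀ (by positivity) (by norm_num)]
      push_cast; nlinarith [Nat.cast_nonneg (α := ℝ) k]
    exact mul_le_mul_of_nonneg_right h1 (pow_nonneg hx_nonneg _)
  have h := hasSum_le hab (Stirling.log_stirlingSeq_diff_hasSum n) g
  refine h.trans (le_of_eq ?_)
  rw [hx]
  have h2 : (2 * ((n:ℕ) + 1 : ℕ) + 1 : ℝ) = 2 * (n:ℝ) + 3 := by push_cast; ring
  rw [h2]
  have h3 : (2 * (n:ℝ) + 3) ≠ 0 := by positivity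
  have h5 : (1:ℝ) - (1/(2*(n:ℝ)+3))^2 = (4*((n:ℝ)+1)*((n:ℝ)+2))/((2*(n:ℝ)+3)^2) := by
    field_simp; ring
  rw [h5]
  have h6 : (4*((n:ℝ)+1)*((n:ℝ)+2)) ≠ 0 := by positivity
  field_simp
  ring

lemma s_pos (n : ℕ) : 0 < Stirling.stirlingSeq (n + 1) := Stirling.stirlingSeq'_pos n

lemma tendsto_s_succ : Tendsto (fun N : ℕ => Stirling.stirlingSeq (N + 1)) atTop (𝓝 (√π)) :=
  Stirling.tendsto_stirlingSeq_sqrt_pi.comp (tendsto_add_atTop_nat 1)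

lemma s_ge (n : ℕ) : √π ≤ Stirling.stirlingSeq (n + 1) := by
  have ha : Antitone fun N : ℕ => Stirling.stirlingSeq (N + 1) := by
    have := Stirling.stirlingSeq'_antitone
    exact this
  exact ha.le_of_tendsto tendsto_s_succ n

lemma telescope (n N : ℕ) :
    Real.log (Stirling.stirlingSeq (n + 1)) ≤
      Real.log (Stirling.stirlingSeq (n + 1 + N)) +
        (1 / (12 * ((n:ℝ) + 1)) - 1 / (12 * ((n:ℝ) + 1 + N))) := by
  induction N with
  | zero => simp
  | succ N ih =>
      have h := diff_le (n + N)
      have hrw : n + 1 + (N + 1) = (n + N) + 2 := by ring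
      have hrw2 : n + 1 + N = (n + N) + 1 := by ring
      rw [hrw]
      rw [hrw2] at ih
      have hcast : ((n + N : ℕ) : ℝ) = (n:ℝ) + N := by push_cast; ring
      push_cast at ih h ⊢
      have hpos1 : (0:ℝ) < 12 * ((n:ℝ) + 1 + N) := by positivity
      have hpos2 : (0:ℝ) < 12 * ((n:ℝ) + 1 + N + 1) := by positivity
      have key : 1 / (12 * ((n:ℝ) + N + 1) * ((n:ℝ) + N + 2)) =
          1 / (12 * ((n:ℝ) + 1 + N)) - 1 / (12 * ((n:ℝ) + 1 + N + 1)) := by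
        rw [div_sub_div _ _ (by positivity) (by positivity)]
        rw [div_eq_div_iff (by positivity) (by positivity)]
        ring
      ring_nf at ih h key ⊢
      linarith [h, ih, key.le, key.ge]

lemma log_s_le (n : ℕ) :
    Real.log (Stirling.stirlingSeq (n + 1)) ≤ Real.log (√π) + 1 / (12 * ((n:ℝ) + 1)) := by
  have htend : Tendsto (fun N : ℕ =>
      Real.log (Stirling.stirlingSeq (n + 1 + N)) +
        (1 / (12 * ((n:ℝ) + 1)) - 1 / (12 * ((n:ℝ) + 1 + N)))) atTop
      (𝓝 (Real.log (√π) + (1 / (12 * ((n:ℝ) + 1)) - 0))) := by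
    apply Tendsto.add
    · have hlog : Tendsto Real.log (𝓝 (√π)) (𝓝 (Real.log (√π))) :=
        (Real.continuousAt_log (by positivity)).tendsto
      have hs : Tendsto (fun N : ℕ => Stirling.stirlingSeq (n + 1 + N)) atTop (𝓝 (√π)) := by
        have := Stirling.tendsto_stirlingSeq_sqrt_pi.comp (tendsto_add_atTop_nat (n + 1))
        simpa [Function.comp_def, Nat.add_comm] using this
      exact hlog.comp hs
    · apply Tendsto.const_sub
      have h0 : Tendsto (fun N : ℕ => 1 / ((N:ℝ) + 1)) atTop (𝓝 0) :=
        tendsto_one_div_add_atTop_nhds_zero_nat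
      apply squeeze_zero (fun N => by positivity) (fun N => ?_) h0
      rw [div_le_div_iff₀ (by positivity) (by positivity)]
      push_cast
      nlinarith [Nat.cast_nonneg (α := ℝ) N, Nat.cast_nonneg (α := ℝ) n]
  have := ge_of_tendsto htend (Eventually.of_forall fun N => telescope n N)
  linarith [this]

lemma s_le (n : ℕ) :
    Stirling.stirlingSeq (n + 1) ≤ √π * Real.exp (1 / (12 * ((n:ℝ) + 1))) := by
  have h := log_s_le n
  have h1 : Stirling.stirlingSeq (n + 1) = Real.exp (Real.log (Stirling.stirlingSeq (n + 1))) :=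
    (Real.exp_log (s_pos n)).symm
  rw [h1]
  have h2 : √π * Real.exp (1 / (12 * ((n:ℝ) + 1))) =
      Real.exp (Real.log (√π) + 1 / (12 * ((n:ℝ) + 1))) := by
    rw [Real.exp_add, Real.exp_log (by positivity)]
  rw [h2]
  exact Real.exp_le_exp.mpr h

lemma logP {t : ℝ} (ht : 0 < t) (ht2 : t ≤ 1/2) :
    t + t^2/3 ≤ (1+t) * Real.log (1+t) := by
  have habs : |(-t)| < 1 := by rw [abs_neg, abs_of_pos ht]; linarith
  have h := Real.abs_log_sub_add_sum_range_le habs 8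
  rw [abs_neg, abs_of_pos ht] at h
  have hsum : (∑ i ∈ Finset.range 8, (-t) ^ (i + 1) / ((i:ℝ) + 1)) =
      -t + t^2/2 - t^3/3 + t^4/4 - t^5/5 + t^6/6 - t^7/7 + t^8/8 := by
    simp [Finset.sum_range_succ]
    ring
  rw [hsum, sub_neg_eq_add] at h
  norm_num at h
  have hb : t ^ (8+1) / (1 - t) ≤ 2 * t^9 := by
    rw [div_le_iff₀ (by linarith)]
    norm_num
    nlinarith [pow_pos ht 9]
  have hlog : (t - t^2/2 + t^3/3 - t^4/4 + t^5/5 - t^6/6 + t^7/7 - t^8/8) - 2*t^9 ≤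
      Real.log (1+t) := by
    have h2 := (abs_le.mp h).1
    linarith
  have h1t : (0:ℝ) < 1 + t := by linarith
  calc t + t^2/3
      ≤ (1+t) * ((t - t^2/2 + t^3/3 - t^4/4 + t^5/5 - t^6/6 + t^7/7 - t^8/8) - 2*t^9) := by
        nlinarith [pow_pos ht 2, pow_pos ht 3, pow_pos ht 4, pow_pos ht 5, pow_pos ht 6,
          pow_pos ht 7, pow_pos ht 8, pow_pos ht 9, pow_pos ht 10,
          pow_le_pow_left₀ ht.le ht2 7, pow_le_pow_left₀ ht.le ht2 8,
          pow_le_pow_left₀ ht.le ht2 9, pow_le_pow_left₀ ht.le ht2 10,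
          mul_pos ht ht, sq_nonneg t, sq_nonneg (t - 1/2)]
    _ ≤ (1+t) * Real.log (1+t) := by
        exact mul_le_mul_of_nonneg_left hlog h1t.le

lemma fact_eq (k : ℕ) :
    ((k+1)! : ℝ) = Stirling.stirlingSeq (k+1) * (√(2*((k:ℝ)+1)) * (((k:ℝ)+1)/Real.exp 1)^(k+1)) := by
  rw [Stirling.stirlingSeq]
  push_cast
  rw [div_mul_cancel₀]
  positivity

lemma fact_ub (k : ℕ) :
    ((k+1)! : ℝ) ≤ √π * Real.exp (1/(12*((k:ℝ)+1))) *
      (√(2*((k:ℝ)+1)) * (((k:ℝ)+1)/Real.exp 1)^(k+1)) := by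
  rw [fact_eq]
  have := s_le k
  have hpos : (0:ℝ) ≤ √(2*((k:ℝ)+1)) * (((k:ℝ)+1)/Real.exp 1)^(k+1) := by positivity
  exact mul_le_mul_of_nonneg_right this hpos

lemma fact_lb (k : ℕ) :
    √π * (√(2*((k:ℝ)+1)) * (((k:ℝ)+1)/Real.exp 1)^(k+1)) ≤ ((k+1)! : ℝ) := by
  rw [fact_eq]
  have := s_ge k
  have hpos : (0:ℝ) ≤ √(2*((k:ℝ)+1)) * (((k:ℝ)+1)/Real.exp 1)^(k+1) := by positivity
  exact mul_le_mul_of_nonneg_right this hpos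

-- even auxiliary: (2m)! ≤ √2 * 4^m * (m/e)^m * m!   for m = k+1
lemma evenE (k : ℕ) :
    (((2*(k+1))! : ℕ) : ℝ) ≤
      √2 * 4^(k+1) * (((k:ℝ)+1)/Real.exp 1)^(k+1) * ((k+1)! : ℝ) := by
  have h2 : 2*(k+1) = (2*k+1)+1 := by ring
  rw [h2, fact_eq (2*k+1), fact_eq k]
  have hs : Stirling.stirlingSeq (2*k+1+1) ≤ Stirling.stirlingSeq (k+1) := by
    have := Stirling.stirlingSeq'_antitone (show (k:ℕ) ≤ 2*k+1 by omega)
    simpa [Function.comp, Nat.succ_eq_add_one] using this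
  push_cast
  have hA : √(2*(2*(k:ℝ)+1+1)) = √2 * √(2*((k:ℝ)+1)) := by
    rw [show (2:ℝ)*(2*(k:ℝ)+1+1) = 2 * (2*((k:ℝ)+1)) by ring,
      Real.sqrt_mul (by norm_num : (0:ℝ) ≤ 2)]
  have hB : ((2*(k:ℝ)+1+1)/Real.exp 1)^(2*k+1+1) =
      4^(k+1)*(((k:ℝ)+1)/Real.exp 1)^(k+1)*(((k:ℝ)+1)/Real.exp 1)^(k+1) := by
    rw [show (2*(k:ℝ)+1+1)/Real.exp 1 = 2*(((k:ℝ)+1)/Real.exp 1) by ring,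
      show 2*k+1+1 = 2*(k+1) by ring, mul_pow, pow_mul, two_mul (k+1), pow_add]
    norm_num
    rw [pow_add]
    ring
  calc Stirling.stirlingSeq (2*k+1+1) * (√(2*(2*(k:ℝ)+1+1)) * ((2*(k:ℝ)+1+1)/Real.exp 1)^(2*k+1+1))
      = (√2 * 4^(k+1) * (((k:ℝ)+1)/Real.exp 1)^(k+1)) *
          (Stirling.stirlingSeq (2*k+1+1) * (√(2*((k:ℝ)+1)) * (((k:ℝ)+1)/Real.exp 1)^(k+1))) := by
        rw [hA, hB]; ring
    _ ≤ (√2 * 4^(k+1) * (((k:ℝ)+1)/Real.exp 1)^(k+1)) *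
          (Stirling.stirlingSeq (k+1) * (√(2*((k:ℝ)+1)) * (((k:ℝ)+1)/Real.exp 1)^(k+1))) := by
        have hpos : (0:ℝ) ≤ √2 * 4^(k+1) * (((k:ℝ)+1)/Real.exp 1)^(k+1) := by positivity
        have hpos2 : (0:ℝ) ≤ √(2*((k:ℝ)+1)) * (((k:ℝ)+1)/Real.exp 1)^(k+1) := by positivity
        exact mul_le_mul_of_nonneg_left (mul_le_mul_of_nonneg_right hs hpos2) hpos
    _ = √2 * 4^(k+1) * (((k:ℝ)+1)/Real.exp 1)^(k+1) *
          (Stirling.stirlingSeq (k+1) * (√(2*((k:ℝ)+1)) * (((k:ℝ)+1)/Real.exp 1)^(k+1))) := by ring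

lemma odd_step (k : ℕ) :
    √π * Real.exp (1/(12*((k:ℝ)+1))) * (√(2*((k:ℝ)+1)) * (((k:ℝ)+1)/Real.exp 1)^(k+1)) ≤
      Real.sqrt (2*π) * ((2*((k:ℝ)+1)+1)/(2*Real.exp 1)) ^ ((2*((k:ℝ)+1)+1)/2) := by
  set M : ℝ := (k:ℝ) + 1 with hM
  have hM0 : (0:ℝ) < M := by positivity
  have hM1 : (1:ℝ) ≤ M := by rw [hM]; linarith [Nat.cast_nonneg (α := ℝ) k]
  set t : ℝ := 1/(2*M) with htdef
  have ht : 0 < t := by positivity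
  have ht2 : t ≤ 1/2 := by
    rw [htdef, div_le_div_iff₀ (by positivity) (by norm_num)]
    linarith
  have h1t : (0:ℝ) < 1 + t := by linarith
  set a : ℝ := M + 1/2 with hadef
  have ha0 : (0:ℝ) < a := by positivity
  have haeq : a = M * (1+t) := by
    rw [hadef, htdef]; field_simp
  have halog : 1/(12*M) + 1/2 ≤ a * Real.log (1+t) := by
    have hlog := logP ht ht2
    have h2 : M * (t + t^2/3) ≤ M * ((1+t) * Real.log (1+t)) :=
      mul_le_mul_of_nonneg_left hlog hM0.le
    have h3 : M * (t + t^2/3) = 1/2 + 1/(12*M) := by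
      rw [htdef]; field_simp; ring
    rw [haeq]
    nlinarith [h2, h3]
  -- rewrite LHS
  have hexp1 : Real.exp 1 ^ (k+1) = Real.exp M := by
    rw [← Real.exp_nat_mul]
    norm_num [hM]
  have hpowM : M ^ (k+1) = M ^ ((k:ℝ)+1) := by
    rw [show ((k:ℝ)+1) = ((k+1 : ℕ) : ℝ) by push_cast; ring, Real.rpow_natCast]
  have eqL : √π * Real.exp (1/(12*M)) * (√(2*M) * (M/Real.exp 1)^(k+1)) =
      (√2 * √π * M ^ a) * Real.exp (1/(12*M) - M) := by
    rw [Real.sqrt_mul (by norm_num : (0:ℝ) ≤ 2) M, div_pow, hexp1, hpowM,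
      Real.sqrt_eq_rpow M, Real.exp_sub,
      show (M:ℝ) ^ a = M ^ ((k:ℝ)+1) * M ^ (1/2 : ℝ) by
        rw [← Real.rpow_add hM0, hadef, hM]]
    ring
  have eqR : Real.sqrt (2*π) * ((2*M+1)/(2*Real.exp 1)) ^ ((2*M+1)/2) =
      (√2 * √π * M ^ a) * Real.exp (Real.log (1+t) * a - a) := by
    have hbase : (2*M+1)/(2*Real.exp 1) = a / Real.exp 1 := by
      rw [hadef]; field_simp
    have hexpo : (2*M+1)/2 = a := by rw [hadef]; ring
    rw [hbase, hexpo, Real.div_rpow ha0.le (Real.exp_pos 1).le, Real.exp_one_rpow,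
      show a ^ a = M ^ a * (1+t) ^ a by rw [haeq, Real.mul_rpow hM0.le h1t.le],
      Real.rpow_def_of_pos h1t, Real.sqrt_mul (by norm_num : (0:ℝ) ≤ 2) π,
      Real.exp_sub]
    ring
  rw [eqL, eqR]
  have hfac : (0:ℝ) ≤ √2 * √π * M ^ a := by positivity
  refine mul_le_mul_of_nonneg_left ?_ hfac
  rw [Real.exp_le_exp]
  nlinarith [halog]

lemma keyK (d : ℕ) (hd : 1 ≤ d) :
    Real.Gamma (((d:ℝ)+1)/2) ≤ Real.sqrt (2*π) * ((d:ℝ)/(2*Real.exp 1)) ^ ((d:ℝ)/2) := by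
  rcases Nat.even_or_odd d with ⟨m, hm⟩ | ⟨m, hm⟩
  · -- even: d = m + m, m ≥ 1, m = k+1
    obtain ⟨k, rfl⟩ : ∃ k, m = k + 1 := ⟨m - 1, by omega⟩
    subst hm
    set M : ℝ := (k:ℝ) + 1 with hMdef
    have hM0 : (0:ℝ) < M := by positivity
    have hcast : ((k+1+(k+1) : ℕ) : ℝ) = 2*M := by push_cast; ring
    have harg : (((k+1+(k+1) : ℕ) : ℝ)+1)/2 = M + 1/2 := by rw [hcast]; ring
    rw [harg, hcast]
    have hdup := Real.Gamma_mul_Gamma_add_half M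
    have hΓM : Real.Gamma M = (k ! : ℝ) := by
      rw [hMdef, Real.Gamma_nat_eq_factorial]
    have hΓ2M : Real.Gamma (2*M) = ((2*k+1)! : ℝ) := by
      rw [show 2*M = ((2*k+1 : ℕ):ℝ)+1 by rw [hMdef]; push_cast; ring,
        Real.Gamma_nat_eq_factorial]
    have hk0 : (0:ℝ) < (k ! : ℝ) := by positivity
    have hGhalf : Real.Gamma (M + 1/2) =
        ((2*k+1)! : ℝ) * (2:ℝ) ^ (1-2*M) * √π / (k ! : ℝ) := by
      rw [eq_div_iff hk0.ne', ← hΓM, ← hΓ2M, ← hdup, mul_comm]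
    rw [hGhalf]
    -- rewrite rpow pieces
    have h2pow : (2:ℝ) ^ (1-2*M) = 2 / (4:ℝ)^(k+1) := by
      rw [show (1:ℝ)-2*M = (1:ℝ) - ((2*(k+1) : ℕ):ℝ) by rw [hMdef]; push_cast; ring,
        Real.rpow_sub (by norm_num), Real.rpow_one, Real.rpow_natCast,
        show (2:ℝ) ^ (2*(k+1)) = 4^(k+1) by rw [pow_mul]; norm_num]
    have hexpo : (2*M)/2 = ((k+1 : ℕ):ℝ) := by rw [hMdef]; push_cast; ring
    have hbase : (2*M)/(2*Real.exp 1) = M / Real.exp 1 := by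
      field_simp
    rw [hexpo, hbase, Real.rpow_natCast]
    -- now use evenE
    have hE := evenE k
    have hfs : (((2*(k+1))! : ℕ) : ℝ) = (2*(k:ℝ)+2) * ((2*k+1)! : ℝ) := by
      rw [show 2*(k+1) = (2*k+1)+1 by ring, Nat.factorial_succ]
      push_cast; ring
    have hfs2 : ((k+1)! : ℝ) = ((k:ℝ)+1) * (k ! : ℝ) := by
      rw [Nat.factorial_succ]; push_cast; ring
    rw [hfs, hfs2] at hE
    have h4pos : (0:ℝ) < (4:ℝ)^(k+1) := by positivity
    have hme : (0:ℝ) ≤ (M/Real.exp 1)^(k+1) := by positivity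
    have hsq2 : Real.sqrt (2*π) = √2 * √π := Real.sqrt_mul (by norm_num) π
    rw [hsq2, h2pow]
    rw [div_le_iff₀ hk0]
    have hπ : (0:ℝ) < √π := by positivity
    have hkp : (0:ℝ) < (k:ℝ)+1 := by positivity
    have hE2 : 2 * ((2*k+1)! : ℝ) ≤ √2 * 4^(k+1) * (((k:ℝ)+1)/Real.exp 1)^(k+1) * (k ! : ℝ) := by
      have h' : ((k:ℝ)+1) * (2 * ((2*k+1)! : ℝ)) ≤
          ((k:ℝ)+1) * (√2 * 4^(k+1) * (((k:ℝ)+1)/Real.exp 1)^(k+1) * (k ! : ℝ)) := by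
        nlinarith [hE]
      exact le_of_mul_le_mul_left h' hkp
    have hE3 := mul_le_mul_of_nonneg_right hE2 hπ.le
    rw [show (((2*k+1)! : ℝ) * (2 / 4^(k+1)) * √π : ℝ) =
        (2 * ((2*k+1)! : ℝ) * √π) / 4^(k+1) by ring, div_le_iff₀ h4pos]
    nlinarith [hE3]
  · -- odd : d = 2m+1
    subst hm
    rcases Nat.eq_zero_or_pos m with rfl | hm1
    · -- d = 1
      have hc1 : ((2*0+1 : ℕ):ℝ) = 1 := by norm_num
      rw [hc1, show ((1:ℝ)+1)/2 = 1 by norm_num, Real.Gamma_one]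
      rw [show (1:ℝ)/2 = ((1:ℝ)/(2*Real.exp 1))^(0:ℕ) * (1/2) by norm_num]
      rw [show ((1:ℝ)/(2*Real.exp 1))^(0:ℕ) * (1/2) = (1:ℝ)/2 by norm_num]
      rw [show ((1:ℝ)/(2*Real.exp 1)) ^ ((1:ℝ)/2) = √(1/(2*Real.exp 1)) by
        rw [Real.sqrt_eq_rpow]]
      rw [← Real.sqrt_mul (by positivity : (0:ℝ) ≤ 2*π)]
      have hpe : (1:ℝ) ≤ 2*π*(1/(2*Real.exp 1)) := by
        rw [show 2*π*(1/(2*Real.exp 1)) = π/Real.exp 1 by field_simp]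
        rw [le_div_iff₀ (Real.exp_pos 1)]
        have h1 := Real.exp_one_lt_d9
        have h2 := Real.pi_gt_three
        linarith
      calc (1:ℝ) = √1 := Real.sqrt_one.symm
        _ ≤ √(2*π*(1/(2*Real.exp 1))) := Real.sqrt_le_sqrt hpe
    · obtain ⟨k, rfl⟩ : ∃ k, m = k + 1 := ⟨m - 1, by omega⟩
      have harg : (((2*(k+1)+1 : ℕ) : ℝ)+1)/2 = ((k+1 : ℕ):ℝ) + 1 := by push_cast; ring
      rw [harg, Real.Gamma_nat_eq_factorial]
      have hcast2 : ((2*(k+1)+1 : ℕ) : ℝ) = 2*((k:ℝ)+1)+1 := by push_cast; ring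
      rw [hcast2]
      calc ((k+1)! : ℝ)
          ≤ √π * Real.exp (1/(12*((k:ℝ)+1))) *
              (√(2*((k:ℝ)+1)) * (((k:ℝ)+1)/Real.exp 1)^(k+1)) := fact_ub k
        _ ≤ Real.sqrt (2*π) * ((2*((k:ℝ)+1)+1)/(2*Real.exp 1)) ^ ((2*((k:ℝ)+1)+1)/2) :=
            odd_step k

theorem Cd_le (d : ℕ) (hd : 1 ≤ d) :
    Real.exp ((d : ℝ) / 4) * Real.sqrt 2 / (8 * (d : ℝ)) ^ ((d : ℝ) / 4)
        * Real.sqrt (Real.Gamma d / Real.Gamma ((d : ℝ) / 2))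
      ≤ (2 : ℝ) ^ (-(d : ℝ) / 2 + 1 / 4) := by
  set D : ℝ := (d:ℝ) with hDdef
  have hD : (0:ℝ) < D := by
    rw [hDdef]; exact_mod_cast Nat.pos_of_ne_zero (by omega)
  have hΓd : 0 < Real.Gamma D := Real.Gamma_pos_of_pos hD
  have hΓh : 0 < Real.Gamma (D/2) := Real.Gamma_pos_of_pos (by positivity)
  have hrat : (0:ℝ) ≤ Real.Gamma D / Real.Gamma (D/2) := by positivity
  have h8D : (0:ℝ) < 8*D := by linarith
  set L : ℝ := Real.exp (D / 4) * Real.sqrt 2 / (8 * D) ^ (D / 4)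
      * Real.sqrt (Real.Gamma D / Real.Gamma (D / 2)) with hLdef
  set R : ℝ := (2:ℝ) ^ (-D / 2 + 1 / 4) with hRdef
  have hL0 : 0 ≤ L := by rw [hLdef]; positivity
  have hR0 : 0 ≤ R := by rw [hRdef]; positivity
  have e1 : Real.exp (D/4)^2 = Real.exp (D/2) := by
    rw [sq, ← Real.exp_add]; ring_nf
  have e2 : (((8*D) ^ (D/4) : ℝ))^2 = (8*D) ^ (D/2) := by
    rw [← Real.rpow_natCast ((8*D) ^ (D/4)) 2, ← Real.rpow_mul h8D.le]
    congr 1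
    push_cast; ring
  have hL2 : L^2 = Real.exp (D/2) * 2 / (8*D) ^ (D/2) * (Real.Gamma D / Real.Gamma (D/2)) := by
    rw [hLdef, mul_pow, div_pow, mul_pow, Real.sq_sqrt hrat,
      Real.sq_sqrt (by norm_num : (0:ℝ) ≤ 2), e1, e2]
  have hR2 : R^2 = (2:ℝ) ^ (-D + 1/2) := by
    rw [hRdef, ← Real.rpow_natCast ((2:ℝ) ^ (-D/2+1/4)) 2, ← Real.rpow_mul (by norm_num)]
    congr 1
    push_cast; ring
  -- duplication formula
  have hdup := Real.Gamma_mul_Gamma_add_half (D/2)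
  rw [show 2*(D/2) = D by ring, show D/2 + 1/2 = (D+1)/2 by ring] at hdup
  have hKey : Real.Gamma ((D+1)/2) ≤ Real.sqrt (2*π) * (D/(2*Real.exp 1)) ^ (D/2) :=
    keyK d hd
  have hΓG : 0 < Real.Gamma ((D+1)/2) := Real.Gamma_pos_of_pos (by positivity)
  have hsqpi : (0:ℝ) < √π := Real.sqrt_pos.mpr Real.pi_pos
  have h2r : (0:ℝ) < (2:ℝ) ^ ((1:ℝ)-D) := Real.rpow_pos_of_pos two_pos _
  have hratio : Real.Gamma D / Real.Gamma (D/2) =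
      Real.Gamma ((D+1)/2) / ((2:ℝ) ^ ((1:ℝ)-D) * √π) := by
    rw [div_eq_div_iff hΓh.ne' (by positivity)]
    linear_combination -hdup
  -- abbreviations
  set p : ℝ := (2:ℝ) ^ (D/2) with hp
  set q : ℝ := D ^ (D/2) with hq
  set r : ℝ := Real.exp (D/2) with hr
  have hp0 : 0 < p := Real.rpow_pos_of_pos two_pos _
  have hq0 : 0 < q := Real.rpow_pos_of_pos hD _
  have hr0 : 0 < r := Real.exp_pos _
  have hpinv : (2:ℝ) ^ (-(D/2)) = p⁻¹ := by
    rw [Real.rpow_neg (by norm_num), hp]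
  have h1D : (2:ℝ) ^ ((1:ℝ)-D) = 2/(p*p) := by
    rw [show (1:ℝ)-D = 1 + (-(D/2) + -(D/2)) by ring, Real.rpow_add two_pos,
      Real.rpow_add two_pos, hpinv, Real.rpow_one]
    field_simp
  have hmD : (2:ℝ) ^ (-D+1/2) = √2/(p*p) := by
    rw [show -D+(1:ℝ)/2 = 1/2 + (-(D/2) + -(D/2)) by ring, Real.rpow_add two_pos,
      Real.rpow_add two_pos, hpinv, ← Real.sqrt_eq_rpow]
    field_simp
  have h8 : ((8:ℝ)*D) ^ (D/2) = p*p*p*q := by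
    rw [show (8:ℝ)*D = 2*(2*(2*D)) by ring, Real.mul_rpow (by norm_num) (by positivity),
      Real.mul_rpow (by norm_num) (by positivity),
      Real.mul_rpow (by norm_num) hD.le]
    rw [hp, hq]; ring
  have hde : (D/(2*Real.exp 1)) ^ (D/2) = q/(p*r) := by
    rw [Real.div_rpow hD.le (by positivity),
      Real.mul_rpow (by norm_num : (0:ℝ) ≤ 2) (Real.exp_pos 1).le, Real.exp_one_rpow, hp, hq, hr]
  have hsq2 : Real.sqrt (2*π) = √2 * √π := Real.sqrt_mul (by norm_num) π
  have hsq : L^2 ≤ R^2 := by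
    rw [hL2, hR2, hratio, hmD, h1D, h8]
    calc r * 2 / (p*p*p*q) * (Real.Gamma ((D+1)/2) / (2/(p*p) * √π))
        ≤ r * 2 / (p*p*p*q) * ((√2 * √π * (q/(p*r))) / (2/(p*p) * √π)) := by
          have hKey' : Real.Gamma ((D+1)/2) ≤ √2 * √π * (q/(p*r)) := by
            rw [← hsq2, ← hde]; exact hKey
          gcongr
      _ = √2/(p*p) := by
          field_simp
  calc L = √(L^2) := (Real.sqrt_sq hL0).symm
    _ ≤ √(R^2) := Real.sqrt_le_sqrt hsq
    _ = R := Real.sqrt_sq hR0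
end

section
/- For all real x with 0 < x < 1, we have (5/2)·x² + log(1+x) ≤ (x + x²)/(1+2x)² · (1 + 5x + (8/γ²)·x²), where γ = (2/5)·√(5(1 + (1/4)·log 2)). -/
lemma log_le_pade {x : ℝ} (hx : 0 ≤ x) : Real.log (1 + x) ≤ x * (x + 6) / (4 * x + 6) := by
  set f : ℝ → ℝ := fun t => t * (t + 6) / (4 * t + 6) - Real.log (1 + t) with hf
  have hder : ∀ t : ℝ, 0 < t → HasDerivAt f
      (((1 * (t + 6) + t * 1) * (4 * t + 6) - t * (t + 6) * (4 * 1)) / (4 * t + 6) ^ 2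
        - (1 + t)⁻¹ * 1) t := by
    intro t ht
    have h46 : (4 * t + 6) ≠ 0 := by linarith
    have h1 : HasDerivAt (fun u : ℝ => u * (u + 6)) (1 * (t + 6) + t * 1) t :=
      (hasDerivAt_id t).mul ((hasDerivAt_id t).add_const 6)
    have h2 : HasDerivAt (fun u : ℝ => 4 * u + 6) (4 * 1) t :=
      ((hasDerivAt_id t).const_mul 4).add_const 6
    have h3 : HasDerivAt (fun u : ℝ => Real.log (1 + u)) ((1 + t)⁻¹ * 1) t :=
      (Real.hasDerivAt_log (by linarith : (1 : ℝ) + t ≠ 0)).comp t ((hasDerivAt_id t).const_add 1)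
    exact (h1.div h2 h46).sub h3
  have hcont : ContinuousOn f (Set.Ici 0) := by
    apply ContinuousOn.sub
    · exact ContinuousOn.div (by fun_prop) (by fun_prop)
        (fun t ht => by simp only [Set.mem_Ici] at ht; intro h; linarith)
    · exact ContinuousOn.log (by fun_prop)
        (fun t ht => by simp only [Set.mem_Ici] at ht; intro h; linarith)
  have hmono : MonotoneOn f (Set.Ici 0) := by
    apply monotoneOn_of_deriv_nonneg (convex_Ici 0) hcont
    · intro t ht
      rw [interior_Ici] at ht
      exact (hder t ht).differentiableAt.differentiableWithinAt
    · intro t ht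
      rw [interior_Ici] at ht
      have ht' : 0 < t := ht
      rw [(hder t ht).deriv]
      have h1t : (0:ℝ) < 1 + t := by linarith
      have h46 : (0:ℝ) < 4 * t + 6 := by linarith
      rw [sub_nonneg, mul_one, inv_eq_one_div, div_le_div_iff₀ h1t (by positivity)]
      nlinarith [pow_pos ht' 3]
  have h0 : f 0 = 0 := by simp [hf]
  have := hmono Set.self_mem_Ici (Set.mem_Ici.mpr hx) hx
  rw [h0] at this
  simpa [hf, sub_nonneg] using this

theorem elementary_calc_ineq (x : ℝ) (hx0 : 0 < x) (hx1 : x < 1) :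
    (5 / 2) * x ^ 2 + Real.log (1 + x)
      ≤ (x + x ^ 2) / (1 + 2 * x) ^ 2 *
        (1 + 5 * x + (8 / ((2 / 5) * Real.sqrt (5 * (1 + (1 / 4) * Real.log 2))) ^ 2) * x ^ 2) := by
  have hL0 : (0:ℝ) < Real.log 2 := Real.log_pos one_lt_two
  have hL1 : Real.log 2 < 0.6931471808 := Real.log_two_lt_d9
  have hsq : ((2 / 5) * Real.sqrt (5 * (1 + (1 / 4) * Real.log 2))) ^ 2
      = (4 + Real.log 2) / 5 := by
    rw [mul_pow, Real.sq_sqrt (by positivity)]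
    ring
  rw [hsq]
  have hC : (8.52 : ℝ) ≤ 8 / ((4 + Real.log 2) / 5) := by
    rw [le_div_iff₀ (by positivity)]
    nlinarith
  have hpos : (0:ℝ) < (x + x ^ 2) / (1 + 2 * x) ^ 2 := by positivity
  have step2 : (x + x ^ 2) / (1 + 2 * x) ^ 2 * (1 + 5 * x + 8.52 * x ^ 2)
      ≤ (x + x ^ 2) / (1 + 2 * x) ^ 2 *
        (1 + 5 * x + 8 / ((4 + Real.log 2) / 5) * x ^ 2) := by
    apply mul_le_mul_of_nonneg_left _ hpos.le
    have : (8.52 : ℝ) * x ^ 2 ≤ 8 / ((4 + Real.log 2) / 5) * x ^ 2 :=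
      mul_le_mul_of_nonneg_right hC (by positivity)
    linarith
  refine le_trans ?_ step2
  have hlog := log_le_pade hx0.le
  have step1 : (5 / 2) * x ^ 2 + x * (x + 6) / (4 * x + 6)
      ≤ (x + x ^ 2) / (1 + 2 * x) ^ 2 * (1 + 5 * x + 8.52 * x ^ 2) := by
    rw [show (5 / 2) * x ^ 2 + x * (x + 6) / (4 * x + 6)
        = ((5 / 2) * x ^ 2 * (4 * x + 6) + x * (x + 6)) / (4 * x + 6) from by
      field_simp]
    rw [show (x + x ^ 2) / (1 + 2 * x) ^ 2 * (1 + 5 * x + 8.52 * x ^ 2)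
        = (x + x ^ 2) * (1 + 5 * x + 8.52 * x ^ 2) / (1 + 2 * x) ^ 2 from
      div_mul_eq_mul_div _ _ _]
    rw [div_le_div_iff₀ (by positivity) (by positivity)]
    nlinarith [mul_nonneg (mul_nonneg (mul_nonneg hx0.le hx0.le) hx0.le)
      (sub_nonneg.mpr (by nlinarith : x ^ 2 ≤ 1)), pow_pos hx0 3, pow_pos hx0 4]
  linarith
end

section
/- Let d ≥ 2 be a natural number, let c = (1/4)·√(5(1 + (log 2)/4)) and y_d = 1/(1 + 16c/(5√d))². Then log(2^{1/4 - d/2} · (1 + 1/√(y_d))^{d/2}) + 1 ≤ (1 - y_d) · (d/8 + c·√d + 1). -/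
set_option maxHeartbeats 1000000

lemma log_le_cubic {t : ℝ} (ht : 0 ≤ t) :
    Real.log (1 + t) ≤ t - t ^ 2 / 2 + t ^ 3 / 3 := by
  set F : ℝ → ℝ := fun v => v - v ^ 2 / 2 + v ^ 3 / 3 - Real.log (1 + v) with hF
  have hD : ∀ u : ℝ, 0 ≤ u → HasDerivAt F (1 - u + u ^ 2 - 1 / (1 + u)) u := by
    intro u hu
    have h1 : HasDerivAt (fun v : ℝ => 1 + v) 1 u := by
      simpa using (hasDerivAt_id u).const_add (1 : ℝ)
    have h2 : HasDerivAt (fun v : ℝ => Real.log (1 + v)) (1 / (1 + u)) u :=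
      h1.log (by linarith)
    have h3 : HasDerivAt (fun v : ℝ => v ^ 2) (2 * u) u := by
      simpa using hasDerivAt_pow 2 u
    have h4 : HasDerivAt (fun v : ℝ => v ^ 3) (3 * u ^ 2) u := by
      simpa using hasDerivAt_pow 3 u
    have h := (((hasDerivAt_id u).sub (h3.div_const 2)).add (h4.div_const 3)).sub h2
    refine h.congr_deriv ?_
    ring
  have mono : MonotoneOn F (Set.Ici 0) := by
    apply monotoneOn_of_deriv_nonneg (convex_Ici 0)
    · intro u hu
      exact (hD u hu).continuousAt.continuousWithinAt
    · intro u hu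
      rw [interior_Ici] at hu
      exact ((hD u (le_of_lt hu)).differentiableAt).differentiableWithinAt
    · intro u hu
      rw [interior_Ici] at hu
      have hu' : (0:ℝ) < u := hu
      rw [(hD u hu'.le).deriv]
      have h1u : (0:ℝ) < 1 + u := by linarith
      have : 1 / (1 + u) ≤ 1 - u + u ^ 2 := by
        rw [div_le_iff₀ h1u]
        nlinarith [hu'.le, sq_nonneg u]
      linarith
  have h0 := mono (Set.self_mem_Ici) (Set.mem_Ici.mpr ht) ht
  have hF0 : F 0 = 0 := by simp [hF]
  have hFt : F t = t - t ^ 2 / 2 + t ^ 3 / 3 - Real.log (1 + t) := rfl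
  rw [hF0, hFt] at h0
  linarith

theorem log_Cd_ineq (d : ℕ) (hd : 2 ≤ d)
    (c : ℝ) (hc : c = (1 / 4) * Real.sqrt (5 * (1 + Real.log 2 / 4)))
    (y : ℝ) (hy : y = 1 / (1 + 16 * c / (5 * Real.sqrt d)) ^ 2) :
    Real.log ((2 : ℝ) ^ ((1 : ℝ) / 4 - (d : ℝ) / 2) * (1 + 1 / Real.sqrt y) ^ ((d : ℝ) / 2)) + 1
      ≤ (1 - y) * ((d : ℝ) / 8 + c * Real.sqrt d + 1) := by
  have hL1 : (0.6931 : ℝ) < Real.log 2 := by linarith [Real.log_two_gt_d9]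
  have hL2 : Real.log 2 < 0.6932 := by linarith [Real.log_two_lt_d9]
  set L := Real.log 2 with hLdef
  have hd0 : (0:ℝ) < (d:ℝ) := by exact_mod_cast Nat.lt_of_lt_of_le (by norm_num) hd
  have hd2 : (2:ℝ) ≤ (d:ℝ) := by exact_mod_cast hd
  set s := Real.sqrt d with hsdef
  have hs0 : 0 < s := Real.sqrt_pos.mpr hd0
  have hs2 : s ^ 2 = (d:ℝ) := Real.sq_sqrt hd0.le
  have hc0 : 0 < c := by
    rw [hc]
    apply mul_pos (by norm_num)
    exact Real.sqrt_pos.mpr (by nlinarith)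
  have hc2 : c ^ 2 = 5 * (1 + L / 4) / 16 := by
    rw [hc, mul_pow, Real.sq_sqrt (by nlinarith)]
    ring
  set x := 16 * c / (5 * s) with hxdef
  have hx0 : 0 < x := by positivity
  have h1x : (0:ℝ) < 1 + x := by linarith
  -- x^2 * d = 16/5 + 4L/5
  have hg : x ^ 2 * (d:ℝ) = 16/5 + 4*L/5 := by
    have : x ^ 2 = 256 * c ^ 2 / (25 * (d:ℝ)) := by
      rw [hxdef, div_pow, mul_pow, mul_pow, hs2]
      ring_nf
    rw [this, hc2]
    field_simp
    ring
  have hxx : x ^ 2 ≤ (8 + 2*L)/5 := by nlinarith [hg, hd2, sq_nonneg x]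
  -- sqrt y
  have hsy : Real.sqrt y = 1 / (1 + x) := by
    rw [hy, one_div, Real.sqrt_inv, Real.sqrt_sq h1x.le, one_div]
  have hinvsy : 1 + 1 / Real.sqrt y = 2 + x := by
    rw [hsy, one_div_one_div]; ring
  have hy1 : 1 - y = x * (2 + x) / (1 + x) ^ 2 := by
    rw [hy]
    field_simp
    ring
  -- c * s
  have hcs : c * s = 5 * x * (d:ℝ) / 16 := by
    have h5s : (5:ℝ) * s ≠ 0 := by positivity
    have : x * (5 * s) = 16 * c := by
      rw [hxdef, div_mul_cancel₀ _ h5s]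
    nlinarith [this, hs2]
  -- log computation
  have h2x0 : (0:ℝ) < 2 + x := by linarith
  have hlog : Real.log ((2 : ℝ) ^ ((1 : ℝ) / 4 - (d : ℝ) / 2) * (1 + 1 / Real.sqrt y) ^ ((d : ℝ) / 2))
      = ((1:ℝ)/4 - (d:ℝ)/2) * L + ((d:ℝ)/2) * Real.log (2 + x) := by
    rw [hinvsy, Real.log_mul (ne_of_gt (Real.rpow_pos_of_pos two_pos _))
      (ne_of_gt (Real.rpow_pos_of_pos h2x0 _)), Real.log_rpow two_pos, Real.log_rpow h2x0]
  have hlog2x : Real.log (2 + x) = L + Real.log (1 + x/2) := by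
    rw [hLdef, ← Real.log_mul two_ne_zero (by positivity)]
    ring_nf
  have hcub : Real.log (1 + x/2) ≤ x/2 - (x/2)^2/2 + (x/2)^3/3 := log_le_cubic (by positivity)
  rw [hlog, hlog2x, hy1, hcs]
  -- now pure algebra
  have hd8 : (0:ℝ) < (d:ℝ)/2 := by linarith
  have hstep : ((1:ℝ)/4 - (d:ℝ)/2) * L + ((d:ℝ)/2) * (L + Real.log (1 + x/2)) + 1
      ≤ L/4 + ((d:ℝ)/2) * (x/2 - (x/2)^2/2 + (x/2)^3/3) + 1 := by
    linarith [mul_le_mul_of_nonneg_left hcub hd8.le]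
  refine le_trans hstep ?_
  -- key polynomial inequality
  have hQ : 0 ≤ 128 - 88*L + (16 - 56*L)*x - (16 + 4*L)*x^2 := by
    nlinarith [hxx, hx0.le, hL1, hL2, sq_nonneg (x - 1.3702), sq_nonneg x,
      mul_nonneg (sub_nonneg.mpr hL2.le) hx0.le, mul_nonneg (sub_nonneg.mpr hL2.le) (sq_nonneg x)]
  have hdd : (d:ℝ) = (16/5 + 4*L/5) / x^2 := by
    field_simp at hg ⊢
    linarith [hg]
  rw [hdd]
  have hid : x * (2 + x) / (1 + x) ^ 2 * ((16/5 + 4*L/5) / x^2 / 8 + 5 * x * ((16/5 + 4*L/5) / x^2) / 16 + 1)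
      - (L/4 + ((16/5 + 4*L/5) / x^2 / 2) * (x/2 - (x/2)^2/2 + (x/2)^3/3) + 1)
      = x * (128 - 88*L + (16 - 56*L)*x - (16 + 4*L)*x^2) / (240 * (1 + x)^2) := by
    field_simp
    ring
  have hpos : 0 ≤ x * (128 - 88*L + (16 - 56*L)*x - (16 + 4*L)*x^2) / (240 * (1 + x)^2) := by
    apply div_nonneg (mul_nonneg hx0.le hQ)
    positivity
  linarith [hid, hpos]
end

section
/- Let d ≥ 2 and define A_d = log(2^{d/2} e^{d/4} √2 / (8d)^{d/4} · √(Γ(d)/Γ(d/2))) and F_d(y) = -d/4 + d√y/4 + y(1 + A_d) + (d/2)·y·log((1 + 1/√y)/2) for y ∈ (0,1). If A_d > -1, then F_d is strictly increasing on (0,1), F_d(y) → -d/4 as y → 0⁺, and F_d(1) = 1 + A_d > 0; hence F_d has a unique zero in (0,1). -/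
open Filter Topology

theorem Fd_unique_zero (d : ℕ) (hd : 2 ≤ d)
    (A : ℝ)
    (hA : A = Real.log ((2 : ℝ) ^ ((d : ℝ) / 2) * Real.exp ((d : ℝ) / 4) * Real.sqrt 2
        / (8 * (d : ℝ)) ^ ((d : ℝ) / 4) * Real.sqrt (Real.Gamma d / Real.Gamma ((d : ℝ) / 2))))
    (F : ℝ → ℝ)
    (hF : ∀ y, F y = -(d : ℝ) / 4 + (d : ℝ) * Real.sqrt y / 4 + y * (1 + A)
        + ((d : ℝ) / 2) * y * Real.log ((1 + 1 / Real.sqrt y) / 2))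
    (hA1 : -1 < A) :
    StrictMonoOn F (Set.Ioo 0 1) ∧
    Tendsto F (𝓝[>] 0) (𝓝 (-(d : ℝ) / 4)) ∧
    F 1 = 1 + A ∧ 0 < 1 + A ∧
    ∃! y, y ∈ Set.Ioo (0 : ℝ) 1 ∧ F y = 0 := by
  have hdpos : (0:ℝ) < d := by
    have : (2:ℝ) ≤ d := by exact_mod_cast hd
    linarith
  have hApos : 0 < 1 + A := by linarith
  have hFeq : F = fun y => -(d : ℝ) / 4 + (d : ℝ) * Real.sqrt y / 4 + y * (1 + A)
        + ((d : ℝ) / 2) * y * Real.log ((1 + 1 / Real.sqrt y) / 2) := funext hF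
  -- derivative
  have key : ∀ y : ℝ, 0 < y → HasDerivAt F
      ((d:ℝ)/(8*Real.sqrt y) + (1+A) + ((d:ℝ)/2)*Real.log ((1+1/Real.sqrt y)/2)
        - (d:ℝ)/(4*(Real.sqrt y+1))) y := by
    intro y hy
    set s := Real.sqrt y with hsdef
    have hs0 : 0 < s := Real.sqrt_pos.mpr hy
    have hsne : s ≠ 0 := hs0.ne'
    have hs2 : s^2 = y := Real.sq_sqrt hy.le
    have upos : 0 < (1 + 1/s)/2 := by positivity
    have h1 : HasDerivAt (fun x => Real.sqrt x) (1/(2*s)) y := Real.hasDerivAt_sqrt hy.ne'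
    have h2 : HasDerivAt (fun x => 1 / Real.sqrt x)
        ((0 * s - 1 * (1/(2*s)))/s^2) y := (hasDerivAt_const y 1).div h1 hsne
    have h3 : HasDerivAt (fun x => (1 + 1/Real.sqrt x)/2)
        ((0 + (0 * s - 1 * (1/(2*s)))/s^2)/2) y := ((hasDerivAt_const y 1).add h2).div_const 2
    have h4 : HasDerivAt (fun x => Real.log ((1 + 1/Real.sqrt x)/2))
        (((0 + (0 * s - 1 * (1/(2*s)))/s^2)/2) / ((1 + 1/s)/2)) y := h3.log upos.ne'
    have h5 : HasDerivAt (fun x => ((d:ℝ)/2) * x * Real.log ((1 + 1/Real.sqrt x)/2))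
        (((d:ℝ)/2 * 1) * Real.log ((1 + 1/s)/2)
          + ((d:ℝ)/2 * y) * (((0 + (0 * s - 1 * (1/(2*s)))/s^2)/2) / ((1 + 1/s)/2))) y := by
      have := (((hasDerivAt_id y).const_mul ((d:ℝ)/2)).mul h4)
      exact this
    have h6 : HasDerivAt F
        (0 + ((d:ℝ) * (1/(2*s)))/4 + 1 * (1+A)
          + (((d:ℝ)/2 * 1) * Real.log ((1 + 1/s)/2)
          + ((d:ℝ)/2 * y) * (((0 + (0 * s - 1 * (1/(2*s)))/s^2)/2) / ((1 + 1/s)/2)))) y := by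
      rw [hFeq]
      exact (((hasDerivAt_const y (-(d:ℝ)/4)).add ((h1.const_mul (d:ℝ)).div_const 4)).add
        ((hasDerivAt_id y).mul_const (1+A))).add h5
    convert h6 using 1
    have h1s : (1:ℝ) + 1/s ≠ 0 := by positivity
    rw [← hs2]
    field_simp
    ring
  -- continuity on Ioi 0
  have hcont : ContinuousOn F (Set.Ioi (0:ℝ)) :=
    fun x hx => ((key x hx).continuousAt).continuousWithinAt
  -- strict mono
  have hmono : StrictMonoOn F (Set.Ioo 0 1) := by
    apply strictMonoOn_of_deriv_pos (convex_Ioo 0 1)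
      (hcont.mono (fun x hx => hx.1))
    intro x hx
    rw [interior_Ioo] at hx
    obtain ⟨hx0, hx1⟩ := hx
    rw [(key x hx0).deriv]
    set s := Real.sqrt x with hsdef
    have hs0 : 0 < s := Real.sqrt_pos.mpr hx0
    have hs1 : s < 1 := by
      rw [hsdef, show (1:ℝ) = Real.sqrt 1 by simp]
      exact Real.sqrt_lt_sqrt hx0.le hx1
    have hlog : 0 ≤ Real.log ((1 + 1/s)/2) := by
      apply Real.log_nonneg
      rw [le_div_iff₀ (by norm_num : (0:ℝ) < 2)]
      have : 1 ≤ 1/s := by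
        rw [le_div_iff₀ hs0]
        linarith
      linarith
    have hkey : (d:ℝ)/(8*s) - (d:ℝ)/(4*(s+1)) = (d:ℝ)*(1-s)/(8*s*(s+1)) := by
      field_simp
      ring
    have hpos : 0 < (d:ℝ)*(1-s)/(8*s*(s+1)) := by
      apply div_pos
      · apply mul_pos hdpos; linarith
      · positivity
    have hlog2 : 0 ≤ ((d:ℝ)/2)*Real.log ((1 + 1/s)/2) := by positivity
    linarith [hkey ▸ hpos]
  -- F 1
  have hF1 : F 1 = 1 + A := by
    rw [hF]; simp [Real.sqrt_one]; ring
  -- tendsto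
  have hTend : Tendsto F (𝓝[>] (0:ℝ)) (𝓝 (-(d : ℝ) / 4)) := by
    have heq : ∀ y ∈ Set.Ioi (0:ℝ), F y = -(d:ℝ)/4 + (d:ℝ)*Real.sqrt y/4 + y*(1+A)
        + (d:ℝ)/2 * (y * Real.log (1 + Real.sqrt y)) - (d:ℝ)/2 * (y * Real.log 2)
        - (d:ℝ)/4 * (Real.log y * y) := by
      intro y hy
      have hy0 : (0:ℝ) < y := hy
      have hs0 : 0 < Real.sqrt y := Real.sqrt_pos.mpr hy0
      have hlogs : Real.log (Real.sqrt y) = Real.log y / 2 := Real.log_sqrt hy0.le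
      have hrw : (1 + 1/Real.sqrt y)/2 = (1 + Real.sqrt y) / (2 * Real.sqrt y) := by
        field_simp; ring
      rw [hF, hrw, Real.log_div (by positivity) (by positivity),
        Real.log_mul (by norm_num) hs0.ne', hlogs]
      ring
    have hsq : Tendsto (fun y : ℝ => Real.sqrt y) (𝓝[>] (0:ℝ)) (𝓝 0) :=
      (Real.continuous_sqrt.tendsto' 0 0 Real.sqrt_zero).mono_left nhdsWithin_le_nhds
    have hid : Tendsto (fun y : ℝ => y) (𝓝[>] (0:ℝ)) (𝓝 0) :=
      tendsto_id.mono_left nhdsWithin_le_nhds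
    have hlog1 : Tendsto (fun y : ℝ => Real.log (1 + Real.sqrt y)) (𝓝[>] (0:ℝ))
        (𝓝 (Real.log 1)) := by
      have : ContinuousAt (fun t : ℝ => Real.log (1 + t)) 0 := by
        apply ContinuousAt.log
        · fun_prop
        · norm_num
      have := this.tendsto.comp hsq
      simpa [Function.comp_def] using this
    have hxlogx : Tendsto (fun y : ℝ => Real.log y * y) (𝓝[>] (0:ℝ)) (𝓝 0) := by
      have := tendsto_log_mul_rpow_nhdsGT_zero (r := 1) one_pos
      simpa [Real.rpow_one] using this
    have hbig : Tendsto (fun y : ℝ => -(d:ℝ)/4 + (d:ℝ)*Real.sqrt y/4 + y*(1+A)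
        + (d:ℝ)/2 * (y * Real.log (1 + Real.sqrt y)) - (d:ℝ)/2 * (y * Real.log 2)
        - (d:ℝ)/4 * (Real.log y * y)) (𝓝[>] (0:ℝ)) (𝓝 (-(d : ℝ) / 4)) := by
      have h : Tendsto (fun y : ℝ => -(d:ℝ)/4 + (d:ℝ)*Real.sqrt y/4 + y*(1+A)
          + (d:ℝ)/2 * (y * Real.log (1 + Real.sqrt y)) - (d:ℝ)/2 * (y * Real.log 2)
          - (d:ℝ)/4 * (Real.log y * y)) (𝓝[>] (0:ℝ))
          (𝓝 (-(d:ℝ)/4 + (d:ℝ)*0/4 + 0*(1+A) + (d:ℝ)/2 * (0 * Real.log 1)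
            - (d:ℝ)/2 * (0 * Real.log 2) - (d:ℝ)/4 * 0)) :=
        ((((tendsto_const_nhds.add ((hsq.const_mul (d:ℝ)).div_const 4)).add
          (hid.mul_const (1+A))).add
          ((hid.mul hlog1).const_mul ((d:ℝ)/2))).sub
          ((hid.mul_const (Real.log 2)).const_mul ((d:ℝ)/2))).sub
          (hxlogx.const_mul ((d:ℝ)/4))
      rw [show (-(d:ℝ)/4 + (d:ℝ)*0/4 + 0*(1+A) + (d:ℝ)/2 * (0 * Real.log 1)
          - (d:ℝ)/2 * (0 * Real.log 2) - (d:ℝ)/4 * 0) = -(d:ℝ)/4 by ring] at h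
      exact h
    exact hbig.congr' (by
      filter_upwards [self_mem_nhdsWithin] with y hy
      exact (heq y hy).symm)
  refine ⟨hmono, hTend, hF1, hApos, ?_⟩
  -- existence of point with F < 0
  have hneg : ∀ᶠ y in 𝓝[>] (0:ℝ), F y < 0 := by
    apply hTend.eventually_lt_const
    linarith
  have hmem : ∀ᶠ y in 𝓝[>] (0:ℝ), y ∈ Set.Ioo (0:ℝ) 1 :=
    Filter.eventually_mem_set.mpr (Ioo_mem_nhdsGT_of_mem (by norm_num : (0:ℝ) ∈ Set.Ico 0 1))
  obtain ⟨y0, hy0neg, hy0mem⟩ := (hneg.and hmem).exists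
  have hy01 : y0 ≤ 1 := hy0mem.2.le
  have hcIcc : ContinuousOn F (Set.Icc y0 1) :=
    hcont.mono (fun x hx => lt_of_lt_of_le hy0mem.1 hx.1)
  have h0mem : (0:ℝ) ∈ Set.Icc (F y0) (F 1) := ⟨hy0neg.le, by rw [hF1]; linarith⟩
  obtain ⟨c, hcIcc', hc0⟩ := intermediate_value_Icc hy01 hcIcc h0mem
  have hc01 : c ∈ Set.Ioo (0:ℝ) 1 := by
    constructor
    · exact lt_of_lt_of_le hy0mem.1 hcIcc'.1
    · rcases lt_or_eq_of_le hcIcc'.2 with h | h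
      · exact h
      · exfalso; rw [h, hF1] at hc0; linarith
  refine ⟨c, ⟨hc01, hc0⟩, ?_⟩
  rintro z ⟨hz, hz0⟩
  exact hmono.injOn hz hc01 (by rw [hz0, hc0])
end
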